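/- arXiv:2206.01079 — 2 statements merged into one kernel-verified Lean document; each statement's English description precedes it below -/
import Mathlib

section
/- For any two policies π and π' in a finite-horizon MDP with horizon H, the average state occupancy distributions satisfy ‖d_π − d_{π'}‖_1 ≤ 2H · E_{s∼d_π}[TV(π(·|s), π'(·|s))], where TV denotes total variation distance between the action distributions. -/
open scoped Classical
open Finset

noncomputable section

/-- A finite-horizon MDP with finite state space `S`, finite action space `A`,
transition kernel `P`, reward function `R` (the reward received on the
transition `(s, a, s')`, valued in `[0,1]`), and initial state distribution `init`. -/
structure MDP (S A : Type) [Fintype S] [Fintype A] where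
  P : S → A → S → ℝ
  R : S → A → S → ℝ
  init : S → ℝ
  P_nonneg : ∀ s a s', 0 ≤ P s a s'
  P_sum_one : ∀ s a, ∑ s', P s a s' = 1
  R_nonneg : ∀ s a s', 0 ≤ R s a s'
  R_le_one : ∀ s a s', R s a s' ≤ 1
  init_nonneg : ∀ s, 0 ≤ init s
  init_sum_one : ∑ s, init s = 1

/-- A trajectory of horizon `H`: the states `s_0, …, s_H` and actions `a_0, …, a_{H-1}`. -/
abbrev Traj (S A : Type) (H : ℕ) := (Fin (H + 1) → S) × (Fin H → A)

variable {S A : Type} [Fintype S] [Fintype A]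

/-- Real-valued indicator of a proposition. -/
def ind (p : Prop) : ℝ := if p then 1 else 0

/-- A (Markovian, stochastic) policy: a probability distribution over actions at every state. -/
def IsPolicy (π : S → A → ℝ) : Prop :=
  (∀ s a, 0 ≤ π s a) ∧ (∀ s, ∑ a, π s a = 1)

/-- A return-conditioned policy: a distribution over actions for every state and target return. -/
def IsCondPolicy (π : S → ℝ → A → ℝ) : Prop :=
  (∀ s g a, 0 ≤ π s g a) ∧ (∀ s g, ∑ a, π s g a = 1)

/-- Probability of a trajectory under policy `π` in MDP `M`. -/
def trajProb (M : MDP S A) (π : S → A → ℝ) (H : ℕ) (τ : Traj S A H) : ℝ :=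
  M.init (τ.1 0) *
    ∏ t : Fin H, (π (τ.1 t.castSucc) (τ.2 t) * M.P (τ.1 t.castSucc) (τ.2 t) (τ.1 t.succ))

/-- Cumulative return `g(τ)` of a trajectory. -/
def ret (M : MDP S A) (H : ℕ) (τ : Traj S A H) : ℝ :=
  ∑ t : Fin H, M.R (τ.1 t.castSucc) (τ.2 t) (τ.1 t.succ)

/-- `J(π)`: expected return of policy `π`. -/
def J (M : MDP S A) (π : S → A → ℝ) (H : ℕ) : ℝ :=
  ∑ τ : Traj S A H, trajProb M π H τ * ret M H τ

/-- Unnormalized joint occupancy (over the `H` decision steps) of (state, action, return):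
`∑_t P_β(s_t = s, a_t = a, g(τ) = g)`. -/
def occSA (M : MDP S A) (β : S → A → ℝ) (H : ℕ) (s : S) (a : A) (g : ℝ) : ℝ :=
  ∑ t : Fin H, ∑ τ : Traj S A H,
    trajProb M β H τ * ind (τ.1 t.castSucc = s ∧ τ.2 t = a ∧ ret M H τ = g)

/-- Unnormalized joint occupancy of (state, return). -/
def occS (M : MDP S A) (β : S → A → ℝ) (H : ℕ) (s : S) (g : ℝ) : ℝ :=
  ∑ t : Fin H, ∑ τ : Traj S A H,
    trajProb M β H τ * ind (τ.1 t.castSucc = s ∧ ret M H τ = g)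

/-- Unnormalized state occupancy `∑_t P_β(s_t = s)`. -/
def visitMass (M : MDP S A) (β : S → A → ℝ) (H : ℕ) (s : S) : ℝ :=
  ∑ t : Fin H, ∑ τ : Traj S A H, trajProb M β H τ * ind (τ.1 t.castSucc = s)

/-- The return-conditioned action distribution `P_β(a | s, g)`. -/
def rcslCond (M : MDP S A) (β : S → A → ℝ) (H : ℕ) (s : S) (g : ℝ) : A → ℝ :=
  fun a => occSA M β H s a g / occS M β H s g

/-- The infinite-data RCSL policy `π_f^RCSL(a|s) = P_β(a | s, g = f(s))`. -/
def rcslPolicy (M : MDP S A) (β : S → A → ℝ) (H : ℕ) (f : S → ℝ) : S → A → ℝ :=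
  fun s => rcslCond M β H s (f s)

/-- `ε`-near-determinism with respect to deterministic dynamics `T` and rewards `r0`:
`P(r ≠ r0(s,a) or s' ≠ T(s,a) | s, a) ≤ ε` at every `(s,a)`. -/
def NearDet (M : MDP S A) (T : S → A → S) (r0 : S → A → ℝ) (ε : ℝ) : Prop :=
  ∀ s a, ∑ s', M.P s a s' * ind (¬(s' = T s a ∧ M.R s a s' = r0 s a)) ≤ ε

/-- `d_π^t(s) = P_π(s_t = s)`, the distribution of the state at step `t`. -/
def stepDist (M : MDP S A) (π : S → A → ℝ) (H : ℕ) (t : Fin (H + 1)) (s : S) : ℝ :=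
  ∑ τ : Traj S A H, trajProb M π H τ * ind (τ.1 t = s)

/-- `d_π(s)`: average state occupancy over the `H` decision steps. -/
def avgOcc (M : MDP S A) (π : S → A → ℝ) (H : ℕ) (s : S) : ℝ :=
  (1 / (H : ℝ)) * ∑ t : Fin H, stepDist M π H t.castSucc s

/-- Total variation distance between two finitely supported action distributions. -/
def tv (p q : A → ℝ) : ℝ := (1 / 2) * ∑ a, |p a - q a|

/-- Kullback–Leibler divergence between two finitely supported action distributions. -/
def klDiv (p q : A → ℝ) : ℝ := ∑ a, p a * Real.log (p a / q a)

/-- The expected loss `L(π̂) = E_{s ∼ P_β} E_{g ∼ P_β(·|s)} [KL(P_β(·|s,g) ‖ π̂(·|s,g))]`. -/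
def expLoss (M : MDP S A) (β : S → A → ℝ) (H : ℕ) (pihat : S → ℝ → A → ℝ) : ℝ :=
  (1 / (H : ℝ)) * ∑ t : Fin H, ∑ τ : Traj S A H, trajProb M β H τ *
    klDiv (rcslCond M β H (τ.1 t.castSucc) (ret M H τ)) (pihat (τ.1 t.castSucc) (ret M H τ))

/-- Joint occupancy of (state, action) restricted to trajectories with return `≥ grho`. -/
def occSAge (M : MDP S A) (β : S → A → ℝ) (H : ℕ) (s : S) (a : A) (grho : ℝ) : ℝ :=
  ∑ t : Fin H, ∑ τ : Traj S A H,
    trajProb M β H τ * ind (τ.1 t.castSucc = s ∧ τ.2 t = a ∧ grho ≤ ret M H τ)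

/-- State occupancy restricted to trajectories with return `≥ grho`. -/
def occSge (M : MDP S A) (β : S → A → ℝ) (H : ℕ) (s : S) (grho : ℝ) : ℝ :=
  ∑ t : Fin H, ∑ τ : Traj S A H,
    trajProb M β H τ * ind (τ.1 t.castSucc = s ∧ grho ≤ ret M H τ)

/-- The top-% BC policy `π_ρ(a|s) = P_β(a | s, g ≥ g_ρ)`. -/
def topPolicy (M : MDP S A) (β : S → A → ℝ) (H : ℕ) (grho : ℝ) : S → A → ℝ :=
  fun s a => occSAge M β H s a grho / occSge M β H s grho

/-- `P_β(g ≥ grho)`. -/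
def retGeProb (M : MDP S A) (β : S → A → ℝ) (H : ℕ) (grho : ℝ) : ℝ :=
  ∑ τ : Traj S A H, trajProb M β H τ * ind (grho ≤ ret M H τ)

/-- The conditional state distribution `P_β(s | g ≥ grho)` (occupancy-averaged). -/
def condStateGe (M : MDP S A) (β : S → A → ℝ) (H : ℕ) (grho : ℝ) (s : S) : ℝ :=
  occSge M β H s grho / ((H : ℝ) * retGeProb M β H grho)

/-- `L_ρ(π̂) = E_{s ∼ P_β(·|g ≥ g_ρ)}[KL(π_ρ(·|s) ‖ π̂(·|s))]`. -/
def lossTop (M : MDP S A) (β : S → A → ℝ) (H : ℕ) (grho : ℝ) (pihat : S → A → ℝ) : ℝ :=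
  ∑ s, condStateGe M β H grho s * klDiv (topPolicy M β H grho s) (pihat s)

/-- State reached after `t` steps of the open-loop action sequence `as`
under the deterministic dynamics `T`, starting from `s1`. -/
def roll (T : S → A → S) (s1 : S) (as : ℕ → A) : ℕ → S
  | 0 => s1
  | t + 1 => T (roll T s1 as t) (as t)

/-- Extension of a finite action sequence to `ℕ` (junk beyond the horizon). -/
def extAct [Nonempty A] {H : ℕ} (as : Fin H → A) : ℕ → A :=
  fun t => if h : t < H then as ⟨t, h⟩ else Classical.arbitrary A

/-- `g(s_1, a_{1:H})`: return of the open-loop action sequence under the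
deterministic dynamics `(T, r0)`. -/
def openRet (T : S → A → S) (r0 : S → A → ℝ) (H : ℕ) (s1 : S) (as : ℕ → A) : ℝ :=
  ∑ t ∈ Finset.range H, r0 (roll T s1 as t) (as t)

/-- The (stochastic representation of a) deterministic policy `s ↦ pid s`. -/
def detPol (pid : S → A) : S → A → ℝ := fun s a => ind (a = pid s)

/-- Return of the deterministic policy `pid` rolled out for `H` steps from `s`
under the deterministic dynamics `(T, r0)`. -/
def detReturn (T : S → A → S) (r0 : S → A → ℝ) (pid : S → A) (H : ℕ) (s : S) : ℝ :=
  ∑ t ∈ Finset.range H, r0 ((fun x => T x (pid x))^[t] s) (pid ((fun x => T x (pid x))^[t] s))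

/-- The optimal value function `V*` with `n` steps to go. -/
def Vstar (M : MDP S A) [Nonempty A] : ℕ → S → ℝ
  | 0 => fun _ => 0
  | n + 1 => fun s =>
      Finset.univ.sup' Finset.univ_nonempty
        (fun a => ∑ s', M.P s a s' * (M.R s a s' + Vstar M n s'))

/-- Probability of a trajectory conditioned on starting at `s1`. -/
def trajProbFrom (M : MDP S A) (π : S → A → ℝ) (H : ℕ) (s1 : S) (τ : Traj S A H) : ℝ :=
  ind (τ.1 0 = s1) *
    ∏ t : Fin H, (π (τ.1 t.castSucc) (τ.2 t) * M.P (τ.1 t.castSucc) (τ.2 t) (τ.1 t.succ))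

/-- `P_β(g = g₀ | s_1 = s1)`. -/
def retProbFrom (M : MDP S A) (β : S → A → ℝ) (H : ℕ) (s1 : S) (g : ℝ) : ℝ :=
  ∑ τ : Traj S A H, trajProbFrom M β H s1 τ * ind (ret M H τ = g)

/-- `P_π(a_{1:H} | s_1)`: probability of an open-loop action sequence under `π` from `s1`. -/
def actSeqProb (M : MDP S A) (π : S → A → ℝ) (H : ℕ) (s1 : S) (as : Fin H → A) : ℝ :=
  ∑ ss : Fin (H + 1) → S, ind (ss 0 = s1) *
    ∏ t : Fin H, (π (ss t.castSucc) (as t) * M.P (ss t.castSucc) (as t) (ss t.succ))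

/-- Probability of an i.i.d. dataset of `N` trajectories sampled from `β`. -/
def dataProb (M : MDP S A) (β : S → A → ℝ) (H N : ℕ) (D : Fin N → Traj S A H) : ℝ :=
  ∏ i, trajProb M β H (D i)

/-- Empirical cross-entropy (negative log likelihood) loss of a return-conditioned policy. -/
def empLoss (M : MDP S A) (H N : ℕ) (π : S → ℝ → A → ℝ) (D : Fin N → Traj S A H) : ℝ :=
  (1 / ((N : ℝ) * (H : ℝ))) * ∑ i, ∑ t : Fin H,
    -Real.log (π ((D i).1 t.castSucc) (ret M H (D i)) ((D i).2 t))

/-- Population cross-entropy loss `L̄(π) = −E_{(s,a,g) ∼ P_β}[log π(a|s,g)]`. -/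
def popCE (M : MDP S A) (β : S → A → ℝ) (H : ℕ) (π : S → ℝ → A → ℝ) : ℝ :=
  (1 / (H : ℝ)) * ∑ t : Fin H, ∑ τ : Traj S A H, trajProb M β H τ *
    (-Real.log (π (τ.1 t.castSucc) (ret M H τ) (τ.2 t)))

/-- Entropy term `H_β = −E_{(s,a,g) ∼ P_β}[log P_β(a|s,g)]`. -/
def entB (M : MDP S A) (β : S → A → ℝ) (H : ℕ) : ℝ :=
  (1 / (H : ℝ)) * ∑ t : Fin H, ∑ τ : Traj S A H, trajProb M β H τ *
    (-Real.log (rcslCond M β H (τ.1 t.castSucc) (ret M H τ) (τ.2 t)))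

/-- Empirical cross-entropy loss of top-% BC: only trajectories with return `≥ grho` are kept. -/
def empLossTop (M : MDP S A) (H N : ℕ) (grho : ℝ) (π : S → A → ℝ)
    (D : Fin N → Traj S A H) : ℝ :=
  ∑ i, ind (grho ≤ ret M H (D i)) * ∑ t : Fin H,
    -Real.log (π ((D i).1 t.castSucc) ((D i).2 t))

/-- Joint occupancy of (state, action, return) for a general data distribution `W`
over trajectories. -/
def occSAW (H : ℕ) (W : Traj S A H → ℝ) (M : MDP S A) (s : S) (a : A) (g : ℝ) : ℝ :=
  ∑ t : Fin H, ∑ τ : Traj S A H, W τ * ind (τ.1 t.castSucc = s ∧ τ.2 t = a ∧ ret M H τ = g)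

/-- Occupancy of (state, return) for a general data distribution `W` over trajectories. -/
def occSW (H : ℕ) (W : Traj S A H → ℝ) (M : MDP S A) (s : S) (g : ℝ) : ℝ :=
  ∑ t : Fin H, ∑ τ : Traj S A H, W τ * ind (τ.1 t.castSucc = s ∧ ret M H τ = g)

/-- The RCSL policy obtained from a general data distribution `W` over trajectories. -/
def rcslPolicyW (H : ℕ) (W : Traj S A H → ℝ) (M : MDP S A) (f : S → ℝ) : S → A → ℝ :=
  fun s a => occSAW H W M s a (f s) / occSW H W M s (f s)


def chain (M : MDP S A) (π : S → A → ℝ) : ℕ → S → ℝ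
  | 0 => M.init
  | t + 1 => fun s' => ∑ s, ∑ a, chain M π t s * (π s a * M.P s a s')

lemma sum_pi_snoc {n : ℕ} {β : Type} [Fintype β] (f : (Fin (n+1) → β) → ℝ) :
    ∑ g : Fin (n+1) → β, f g = ∑ g : Fin n → β, ∑ x : β, f (Fin.snoc g x) := by
  rw [← (Fin.snocEquiv (fun _ => β)).sum_comp f, Fintype.sum_prod_type, Finset.sum_comm]
  rfl

lemma trajProb_snoc (M : MDP S A) (π : S → A → ℝ) (H : ℕ)
    (ss : Fin (H+1) → S) (as : Fin H → A) (s' : S) (a : A) :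
    trajProb M π (H+1) (Fin.snoc ss s', Fin.snoc as a)
      = trajProb M π H (ss, as) * (π (ss (Fin.last H)) a * M.P (ss (Fin.last H)) a s') := by
  unfold trajProb
  dsimp only
  rw [Fin.prod_univ_castSucc]
  have h0 : (Fin.snoc ss s' : Fin (H+2) → S) 0 = ss 0 := by
    have : (0 : Fin (H+2)) = Fin.castSucc 0 := rfl
    rw [this, Fin.snoc_castSucc]
  rw [h0]
  have hterm : ∀ u : Fin H,
      (π ((Fin.snoc ss s' : Fin (H+2) → S) u.castSucc.castSucc) ((Fin.snoc as a : Fin (H+1) → A) u.castSucc) *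
        M.P ((Fin.snoc ss s' : Fin (H+2) → S) u.castSucc.castSucc) ((Fin.snoc as a : Fin (H+1) → A) u.castSucc) ((Fin.snoc ss s' : Fin (H+2) → S) u.castSucc.succ))
      = (π (ss u.castSucc) (as u) * M.P (ss u.castSucc) (as u) (ss u.succ)) := by
    intro u
    rw [Fin.snoc_castSucc, Fin.snoc_castSucc, Fin.succ_castSucc, Fin.snoc_castSucc]
  simp only [hterm]
  have hl1 : (Fin.snoc ss s' : Fin (H+2) → S) (Fin.last H).castSucc = ss (Fin.last H) := by
    rw [Fin.snoc_castSucc]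
  have hl2 : (Fin.snoc as a : Fin (H+1) → A) (Fin.last H) = a := by
    rw [Fin.snoc_last]
  have hl3 : (Fin.snoc ss s' : Fin (H+2) → S) (Fin.last H).succ = s' := by
    have : (Fin.last H).succ = Fin.last (H+1) := rfl
    rw [this, Fin.snoc_last]
  rw [hl1, hl2, hl3]
  ring

lemma marg (M : MDP S A) (π : S → A → ℝ) (hπ : IsPolicy π) :
    ∀ (H t : ℕ) (ht : t < H + 1) (g : S → ℝ),
    ∑ τ : Traj S A H, trajProb M π H τ * g (τ.1 ⟨t, ht⟩)
      = ∑ s, chain M π t s * g s := by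
  intro H
  induction H with
  | zero =>
    intro t ht g
    have ht0 : t = 0 := by omega
    subst ht0
    rw [Fintype.sum_prod_type]
    calc ∑ ss : Fin 1 → S, ∑ as : Fin 0 → A, trajProb M π 0 (ss, as) * g ((ss, as).1 ⟨0, ht⟩)
        = ∑ ss : Fin 1 → S, M.init (ss 0) * g (ss 0) := by
          apply Finset.sum_congr rfl; intro ss _
          rw [Fintype.sum_unique]
          simp [trajProb]
      _ = ∑ s, chain M π 0 s * g s := by
          rw [← (Equiv.funUnique (Fin 1) S).symm.sum_comp
            (fun ss => M.init (ss 0) * g (ss 0))]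
          apply Finset.sum_congr rfl; intro s _
          simp [chain, Equiv.funUnique]
  | succ H IH =>
    intro t ht g
    rw [Fintype.sum_prod_type, sum_pi_snoc]
    have hstep : ∀ (ss : Fin (H+1) → S) (s' : S),
        (∑ as : Fin (H+1) → A,
          trajProb M π (H+1) (Fin.snoc ss s', as) * g ((Fin.snoc ss s' : Fin (H+2) → S) ⟨t, ht⟩))
        = ∑ as : Fin H → A, ∑ a : A,
          (trajProb M π H (ss, as) * (π (ss (Fin.last H)) a * M.P (ss (Fin.last H)) a s'))
            * g ((Fin.snoc ss s' : Fin (H+2) → S) ⟨t, ht⟩) := by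
      intro ss s'
      rw [sum_pi_snoc (fun as => trajProb M π (H+1) (Fin.snoc ss s', as)
        * g ((Fin.snoc ss s' : Fin (H+2) → S) ⟨t, ht⟩))]
      apply Finset.sum_congr rfl; intro as _
      apply Finset.sum_congr rfl; intro a _
      rw [trajProb_snoc]
    simp only [hstep]
    by_cases hcase : t < H + 1
    · -- index lies in the prefix
      have hidx : ∀ (ss : Fin (H+1) → S) (s' : S),
          (Fin.snoc ss s' : Fin (H+2) → S) ⟨t, ht⟩ = ss ⟨t, hcase⟩ := by
        intro ss s'
        have : (⟨t, ht⟩ : Fin (H+2)) = Fin.castSucc ⟨t, hcase⟩ := rfl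
        rw [this, Fin.snoc_castSucc]
      simp only [hidx]
      have key : ∀ (c d : ℝ) (s0 : S),
          ∑ s' : S, ∑ a : A, c * (π s0 a * M.P s0 a s') * d = c * d := by
        intro c d s0
        rw [Finset.sum_comm]
        calc ∑ a : A, ∑ s' : S, c * (π s0 a * M.P s0 a s') * d
            = ∑ a : A, (c * d * π s0 a) * ∑ s' : S, M.P s0 a s' := by
              apply Finset.sum_congr rfl; intro a _
              rw [Finset.mul_sum]
              apply Finset.sum_congr rfl; intro s' _; ring
          _ = c * d := by
              simp only [M.P_sum_one, mul_one, ← Finset.mul_sum, hπ.2, mul_one]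
      calc ∑ ss : Fin (H+1) → S, ∑ s' : S, ∑ as : Fin H → A, ∑ a : A,
              (trajProb M π H (ss, as) * (π (ss (Fin.last H)) a * M.P (ss (Fin.last H)) a s'))
                * g (ss ⟨t, hcase⟩)
          = ∑ ss : Fin (H+1) → S, ∑ as : Fin H → A,
              trajProb M π H (ss, as) * g (ss ⟨t, hcase⟩) := by
            apply Finset.sum_congr rfl; intro ss _
            rw [Finset.sum_comm]
            apply Finset.sum_congr rfl; intro as _
            exact key _ _ _
        _ = ∑ s, chain M π t s * g s := by
            have := IH t hcase g
            rw [Fintype.sum_prod_type] at this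
            exact this
    · -- index is the new last coordinate
      have htH : t = H + 1 := by omega
      subst htH
      have hidx : ∀ (ss : Fin (H+1) → S) (s' : S),
          (Fin.snoc ss s' : Fin (H+2) → S) ⟨H + 1, ht⟩ = s' := by
        intro ss s'
        have : (⟨H + 1, ht⟩ : Fin (H+2)) = Fin.last (H+1) := rfl
        rw [this, Fin.snoc_last]
      simp only [hidx]
      have key2 : ∀ (c : ℝ) (s0 : S),
          ∑ s' : S, ∑ a : A, c * (π s0 a * M.P s0 a s') * g s'
            = c * ∑ a : A, ∑ s' : S, π s0 a * M.P s0 a s' * g s' := by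
        intro c s0
        rw [Finset.sum_comm, Finset.mul_sum]
        apply Finset.sum_congr rfl; intro a _
        rw [Finset.mul_sum]
        apply Finset.sum_congr rfl; intro s' _; ring
      calc ∑ ss : Fin (H+1) → S, ∑ s' : S, ∑ as : Fin H → A, ∑ a : A,
              (trajProb M π H (ss, as) * (π (ss (Fin.last H)) a * M.P (ss (Fin.last H)) a s'))
                * g s'
          = ∑ ss : Fin (H+1) → S, ∑ as : Fin H → A, trajProb M π H (ss, as) *
              (∑ a : A, ∑ s' : S, π (ss (Fin.last H)) a * M.P (ss (Fin.last H)) a s' * g s') := by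
            apply Finset.sum_congr rfl; intro ss _
            rw [Finset.sum_comm]
            apply Finset.sum_congr rfl; intro as _
            exact key2 _ _
        _ = ∑ s, chain M π H s * ∑ a : A, ∑ s' : S, π s a * M.P s a s' * g s' := by
            have := IH H (Nat.lt_succ_self H)
              (fun s0 => ∑ a : A, ∑ s' : S, π s0 a * M.P s0 a s' * g s')
            rw [Fintype.sum_prod_type] at this
            exact this
        _ = ∑ s, ∑ a : A, ∑ s' : S,
              chain M π H s * (π s a * M.P s a s') * g s' := by
            apply Finset.sum_congr rfl; intro s _
            rw [Finset.mul_sum]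
            apply Finset.sum_congr rfl; intro a _
            rw [Finset.mul_sum]
            apply Finset.sum_congr rfl; intro s' _; ring
        _ = ∑ s' : S, ∑ s, ∑ a : A,
              chain M π H s * (π s a * M.P s a s') * g s' := by
            rw [show (∑ s, ∑ a : A, ∑ s' : S, chain M π H s * (π s a * M.P s a s') * g s')
                = ∑ s, ∑ s' : S, ∑ a : A, chain M π H s * (π s a * M.P s a s') * g s' from
              Finset.sum_congr rfl fun s _ => Finset.sum_comm]
            exact Finset.sum_comm
        _ = ∑ s, chain M π (H+1) s * g s := by
            apply Finset.sum_congr rfl; intro s' _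
            rw [show chain M π (H+1) s' = ∑ s, ∑ a, chain M π H s * (π s a * M.P s a s') from rfl,
              Finset.sum_mul]
            apply Finset.sum_congr rfl; intro s _
            rw [Finset.sum_mul]

lemma chain_nonneg (M : MDP S A) (π : S → A → ℝ) (hπ : IsPolicy π) :
    ∀ t s, 0 ≤ chain M π t s := by
  intro t
  induction t with
  | zero => exact M.init_nonneg
  | succ t ih =>
    intro s'
    apply Finset.sum_nonneg; intro s _
    apply Finset.sum_nonneg; intro a _
    exact mul_nonneg (ih s) (mul_nonneg (hπ.1 s a) (M.P_nonneg s a s'))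

lemma chain_diff (M : MDP S A) (π π' : S → A → ℝ) (hπ : IsPolicy π) (hπ' : IsPolicy π')
    (t : ℕ) :
    ∑ s, |chain M π (t+1) s - chain M π' (t+1) s| ≤
      ∑ s, |chain M π t s - chain M π' t s|
        + ∑ s, chain M π t s * ∑ a, |π s a - π' s a| := by
  have h1 : ∀ s', |chain M π (t+1) s' - chain M π' (t+1) s'| ≤
      ∑ s, ∑ a, |chain M π t s * π s a - chain M π' t s * π' s a| * M.P s a s' := by
    intro s'
    have hd : chain M π (t+1) s' - chain M π' (t+1) s'
        = ∑ s, ∑ a, (chain M π t s * π s a - chain M π' t s * π' s a) * M.P s a s' := by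
      rw [show chain M π (t+1) s' = ∑ s, ∑ a, chain M π t s * (π s a * M.P s a s') from rfl,
        show chain M π' (t+1) s' = ∑ s, ∑ a, chain M π' t s * (π' s a * M.P s a s') from rfl,
        ← Finset.sum_sub_distrib]
      apply Finset.sum_congr rfl; intro s _
      rw [← Finset.sum_sub_distrib]
      apply Finset.sum_congr rfl; intro a _; ring
    rw [hd]
    refine (Finset.abs_sum_le_sum_abs _ _).trans ?_
    apply Finset.sum_le_sum; intro s _
    refine (Finset.abs_sum_le_sum_abs _ _).trans ?_
    apply Finset.sum_le_sum; intro a _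
    rw [abs_mul, abs_of_nonneg (M.P_nonneg s a s')]
  calc ∑ s', |chain M π (t+1) s' - chain M π' (t+1) s'|
      ≤ ∑ s', ∑ s, ∑ a, |chain M π t s * π s a - chain M π' t s * π' s a| * M.P s a s' :=
        Finset.sum_le_sum fun s' _ => h1 s'
    _ = ∑ s, ∑ a, |chain M π t s * π s a - chain M π' t s * π' s a| := by
        rw [Finset.sum_comm]
        apply Finset.sum_congr rfl; intro s _
        rw [Finset.sum_comm]
        apply Finset.sum_congr rfl; intro a _
        rw [← Finset.mul_sum, M.P_sum_one, mul_one]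
    _ ≤ ∑ s, (|chain M π t s - chain M π' t s| + chain M π t s * ∑ a, |π s a - π' s a|) := by
        apply Finset.sum_le_sum; intro s _
        calc ∑ a, |chain M π t s * π s a - chain M π' t s * π' s a|
            ≤ ∑ a, (|chain M π t s - chain M π' t s| * π' s a
                + chain M π t s * |π s a - π' s a|) := by
              apply Finset.sum_le_sum; intro a _
              have : chain M π t s * π s a - chain M π' t s * π' s a
                  = (chain M π t s - chain M π' t s) * π' s a
                    + chain M π t s * (π s a - π' s a) := by ring
              rw [this]
              refine (abs_add_le _ _).trans ?_
              rw [abs_mul, abs_mul, abs_of_nonneg (hπ'.1 s a),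
                abs_of_nonneg (chain_nonneg M π hπ t s)]
          _ = |chain M π t s - chain M π' t s| + chain M π t s * ∑ a, |π s a - π' s a| := by
              rw [Finset.sum_add_distrib, ← Finset.mul_sum, ← Finset.mul_sum, hπ'.2, mul_one]
    _ = _ := Finset.sum_add_distrib

lemma chain_diff_cum (M : MDP S A) (π π' : S → A → ℝ) (hπ : IsPolicy π) (hπ' : IsPolicy π') :
    ∀ t, ∑ s, |chain M π t s - chain M π' t s| ≤
      ∑ u ∈ Finset.range t, ∑ s, chain M π u s * ∑ a, |π s a - π' s a| := by
  intro t
  induction t with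
  | zero => simp [chain]
  | succ t ih =>
    rw [Finset.sum_range_succ]
    have := chain_diff M π π' hπ hπ' t
    linarith

lemma stepDist_eq (M : MDP S A) (π : S → A → ℝ) (hπ : IsPolicy π) (H : ℕ)
    (t : Fin (H+1)) (s : S) :
    stepDist M π H t s = chain M π t.val s := by
  have h := marg M π hπ H t.val t.isLt (fun x => ind (x = s))
  unfold stepDist
  simp only [Fin.eta] at h
  rw [h]
  simp [ind, mul_ite, mul_one, mul_zero]

/-- Lemma 1.
For any two policies `π, π'`, the average state occupancy distributions satisfy
`‖d_π − d_{π'}‖₁ ≤ 2 H · E_{s ∼ d_π}[TV(π(·|s), π'(·|s))]`. -/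
theorem occupancy_l1_bound
    {S A : Type} [Fintype S] [Fintype A]
    (M : MDP S A) (H : ℕ)
    (π π' : S → A → ℝ) (hπ : IsPolicy π) (hπ' : IsPolicy π') :
    ∑ s, |avgOcc M π H s - avgOcc M π' H s| ≤
      2 * (H : ℝ) * ∑ s, avgOcc M π H s * tv (π s) (π' s) := by
  rcases Nat.eq_zero_or_pos H with hH | hH
  · subst hH
    simp [avgOcc]
  have hH' : (0:ℝ) < H := by exact_mod_cast hH
  have havg : ∀ (ρ : S → A → ℝ), IsPolicy ρ → ∀ s : S,
      avgOcc M ρ H s = (1/(H:ℝ)) * ∑ t ∈ Finset.range H, chain M ρ t s := by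
    intro ρ hρ s
    unfold avgOcc
    congr 1
    rw [← Fin.sum_univ_eq_sum_range (fun t => chain M ρ t s)]
    apply Finset.sum_congr rfl; intro t _
    exact stepDist_eq M ρ hρ H t.castSucc s
  have he_nonneg : ∀ u, 0 ≤ ∑ s, chain M π u s * ∑ a, |π s a - π' s a| := by
    intro u
    apply Finset.sum_nonneg; intro s _
    exact mul_nonneg (chain_nonneg M π hπ u s)
      (Finset.sum_nonneg fun a _ => abs_nonneg _)
  have hrhs : 2 * (H:ℝ) * ∑ s, avgOcc M π H s * tv (π s) (π' s)
      = ∑ u ∈ Finset.range H, ∑ s, chain M π u s * ∑ a, |π s a - π' s a| := by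
    rw [Finset.mul_sum]
    rw [show (∑ s, 2 * (H:ℝ) * (avgOcc M π H s * tv (π s) (π' s)))
        = ∑ s, (∑ t ∈ Finset.range H, chain M π t s) * ∑ a, |π s a - π' s a| from
      Finset.sum_congr rfl fun s _ => by
        rw [havg π hπ s]; unfold tv; field_simp]
    rw [show (∑ s, (∑ t ∈ Finset.range H, chain M π t s) * ∑ a, |π s a - π' s a|)
        = ∑ s, ∑ t ∈ Finset.range H, chain M π t s * ∑ a, |π s a - π' s a| from
      Finset.sum_congr rfl fun s _ => Finset.sum_mul _ _ _]
    exact Finset.sum_comm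
  rw [hrhs]
  calc ∑ s, |avgOcc M π H s - avgOcc M π' H s|
      = (1/(H:ℝ)) * ∑ s, |∑ t ∈ Finset.range H, (chain M π t s - chain M π' t s)| := by
        rw [Finset.mul_sum]
        apply Finset.sum_congr rfl; intro s _
        rw [havg π hπ s, havg π' hπ' s, ← mul_sub, abs_mul, Finset.sum_sub_distrib,
          abs_of_nonneg (by positivity : (0:ℝ) ≤ 1/(H:ℝ))]
    _ ≤ (1/(H:ℝ)) * ∑ t ∈ Finset.range H, ∑ s, |chain M π t s - chain M π' t s| := by
        apply mul_le_mul_of_nonneg_left _ (by positivity)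
        rw [Finset.sum_comm]
        apply Finset.sum_le_sum; intro s _
        exact Finset.abs_sum_le_sum_abs _ _
    _ ≤ (1/(H:ℝ)) * ∑ t ∈ Finset.range H, ∑ u ∈ Finset.range H,
          ∑ s, chain M π u s * ∑ a, |π s a - π' s a| := by
        apply mul_le_mul_of_nonneg_left _ (by positivity)
        apply Finset.sum_le_sum; intro t ht
        refine (chain_diff_cum M π π' hπ hπ' t).trans ?_
        apply Finset.sum_le_sum_of_subset_of_nonneg
          (Finset.range_subset_range.mpr (Finset.mem_range.mp ht).le)
        intro u _ _; exact he_nonneg u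
    _ = ∑ u ∈ Finset.range H, ∑ s, chain M π u s * ∑ a, |π s a - π' s a| := by
        rw [Finset.sum_const, Finset.card_range, nsmul_eq_mul]
        field_simp
end
end

section
/- Consider the horizon-1 MDP with a single initial state s_1 and two actions, where action a_1 yields return g = 1 with probability 1 − ε and g = 0 with probability ε, action a_2 yields g = 1 with probability ε and g = 0 with probability 1 − ε, and the behavior policy selects a_1 with probability ε and a_2 with probability 1 − ε. Then with conditioning f(s_1) = 1, the RCSL policy satisfies π_f^RCSL(a_1|s_1) = ε(1−ε)/(ε(1−ε) + (1−ε)ε) = 1/2, so E[f(s_1)] − J(π_f^RCSL) = 1/2 and J(π*) − J(π_f^RCSL) = 1/2 − ε. -/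
open scoped Classical
open Finset

noncomputable section

variable {S A : Type} [Fintype S] [Fintype A]

lemma sum_pi2' (F : (Fin 2 → Fin 3) → ℝ) : ∑ g, F g = ∑ x : Fin 3, ∑ y : Fin 3, F ![x, y] := by
  rw [← (piFinTwoEquiv fun _ => Fin 3).symm.sum_comp, Fintype.sum_prod_type]; rfl

lemma sum_pi1' (F : (Fin 1 → Fin 2) → ℝ) : ∑ g, F g = ∑ a : Fin 2, F (fun _ => a) := by
  rw [← (Equiv.funUnique (Fin 1) (Fin 2)).symm.sum_comp]; rfl

/-- the bias example of Figure 1c.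
Horizon-1 MDP with a single initial state `0`, a "win" state `1` (reward 1) and a
"lose" state `2` (reward 0).  Action `a₁ = 0` yields return `1` w.p. `1 − ε`, action
`a₂ = 1` yields return `1` w.p. `ε`; the behavior selects `a₁` w.p. `ε` and `a₂`
w.p. `1 − ε`.  With conditioning `f(s₁) = 1`:
`π_f^RCSL(a₁|s₁) = ε(1−ε)/(ε(1−ε) + (1−ε)ε) = 1/2`, hence
`E[f(s₁)] − J(π_f^RCSL) = 1/2` and `J(π*) − J(π_f^RCSL) = 1/2 − ε`. -/
theorem figure_1c_example
    (ε : ℝ) (hε0 : 0 < ε) (hε1 : ε < 1 / 2)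
    (M : MDP (Fin 3) (Fin 2))
    (hinit : M.init = fun s => ind (s = 0))
    -- action `a₁ = 0`: win w.p. `1 − ε`; action `a₂ = 1`: win w.p. `ε`
    (hP0 : ∀ s', M.P 0 0 s' = if s' = 1 then 1 - ε else if s' = 2 then ε else 0)
    (hP1 : ∀ s', M.P 0 1 s' = if s' = 1 then ε else if s' = 2 then 1 - ε else 0)
    (hR : ∀ a s', M.R 0 a s' = ind (s' = 1))
    -- behavior policy: `β(a₁|s₁) = ε`, `β(a₂|s₁) = 1 − ε`
    (β : Fin 3 → Fin 2 → ℝ) (hβ : β = fun _ a => if a = 0 then ε else 1 - ε)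
    -- conditioning value `f(s₁) = 1`
    (f : Fin 3 → ℝ) (hf : f = fun _ => 1) :
    rcslPolicy M β 1 f 0 0 = 1 / 2 ∧
    (∑ s, M.init s * f s) - J M (rcslPolicy M β 1 f) 1 = 1 / 2 ∧
    ∀ πstar : Fin 3 → Fin 2 → ℝ, IsPolicy πstar →
      (∀ π, IsPolicy π → J M π 1 ≤ J M πstar 1) →
      J M πstar 1 - J M (rcslPolicy M β 1 f) 1 = 1 / 2 - ε := by
  have hJ : ∀ π : Fin 3 → Fin 2 → ℝ, J M π 1 = π 0 0 * (1 - ε) + π 0 1 * ε := by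
    intro π
    unfold J trajProb ret
    rw [Fintype.sum_prod_type, sum_pi2']
    simp only [sum_pi1']
    simp [Fin.sum_univ_three, Fin.sum_univ_two, Fin.sum_univ_one, Fin.prod_univ_one, hinit, ind]
    simp [hP0, hP1, hR, ind]
    try ring
  have hocc : ∀ a : Fin 2, occSA M β 1 0 a 1 = ε * (1 - ε) := by
    intro a
    unfold occSA trajProb ret
    rw [Fin.sum_univ_one, Fintype.sum_prod_type, sum_pi2']
    simp only [sum_pi1']
    fin_cases a <;>
    · simp [Fin.sum_univ_three, Fin.sum_univ_two, Fin.sum_univ_one, Fin.prod_univ_one,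
        hinit, hβ, ind]
      simp [hP0, hP1, hR, ind]
      try ring
  have hoccS : occS M β 1 0 1 = 2 * (ε * (1 - ε)) := by
    unfold occS trajProb ret
    rw [Fin.sum_univ_one, Fintype.sum_prod_type, sum_pi2']
    simp only [sum_pi1']
    simp [Fin.sum_univ_three, Fin.sum_univ_two, Fin.sum_univ_one, Fin.prod_univ_one,
      hinit, hβ, ind]
    simp [hP0, hP1, hR, ind]
    ring
  have hne : ε * (1 - ε) ≠ 0 := by nlinarith
  have hrcsl : ∀ a : Fin 2, rcslPolicy M β 1 f 0 a = 1 / 2 := by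
    intro a
    unfold rcslPolicy rcslCond
    rw [hf]
    simp only [hocc, hoccS]
    field_simp
    ring_nf
    field_simp [show (1:ℝ) - ε ≠ 0 by linarith]
    ring
  have hJr : J M (rcslPolicy M β 1 f) 1 = 1 / 2 := by
    rw [hJ, hrcsl 0, hrcsl 1]; ring
  refine ⟨hrcsl 0, ?_, ?_⟩
  · rw [hJr, hinit, hf]
    simp [ind, Fin.sum_univ_three]
    norm_num
  · intro πstar hps hopt
    have h1 : J M πstar 1 ≤ 1 - ε := by
      rw [hJ]
      have h0 := hps.1 0 0
      have h01 := hps.1 0 1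
      have hsum : πstar 0 0 + πstar 0 1 = 1 := by
        have := hps.2 0; rwa [Fin.sum_univ_two] at this
      nlinarith
    have h2 : 1 - ε ≤ J M πstar 1 := by
      have hd : IsPolicy (detPol (fun _ : Fin 3 => (0 : Fin 2))) := by
        constructor
        · intro s a; unfold detPol ind; positivity
        · intro s; unfold detPol ind; rw [Fin.sum_univ_two]; norm_num
      have := hopt _ hd
      rw [hJ] at this
      unfold detPol ind at this
      norm_num at this
      linarith
    have : J M πstar 1 = 1 - ε := le_antisymm h1 h2
    rw [this, hJr]; ring
end
end
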